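/- Let Ŵ whiten M̂₂ and let D be the diagonal matrix of eigenvalues of Ŵᵀ M₂ Ŵ with eigenvector matrix A (so Ŵᵀ M₂ Ŵ = A D Aᵀ). Then ‖I − D‖₂ ≤ ‖Ŵ‖₂² · ‖M₂ − M̂₂‖₂, and hence ‖I − D‖₂ ≤ (2/σ_K(M₂)) ‖M₂ − M̂₂‖₂ when ‖M₂ − M̂₂‖₂ ≤ σ_K(M₂)/2. -/

import Mathlib

open Matrix Finset

noncomputable def opNorm {m n : Type*} [Fintype m] [Fintype n] [DecidableEq n]
    (A : Matrix m n ℝ) : ℝ :=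
  ‖(Matrix.toEuclideanLin A).toContinuousLinearMap‖

open scoped Matrix.Norms.L2Operator InnerProductSpace

lemma opNorm_eq {m n : Type*} [Fintype m] [Fintype n] [DecidableEq n]
    (A : Matrix m n ℝ) : opNorm A = ‖A‖ := rfl

lemma norm_one_mat {K : ℕ} (hK : 0 < K) : ‖(1 : Matrix (Fin K) (Fin K) ℝ)‖ = 1 := by
  haveI : Nonempty (Fin K) := Fin.pos_iff_nonempty.mp hK
  rw [Matrix.cstar_norm_def, _root_.map_one]
  exact ContinuousLinearMap.norm_id

lemma norm_orth {K : ℕ} {A : Matrix (Fin K) (Fin K) ℝ} (hK : 0 < K) (hA : Aᵀ * A = 1) :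
    ‖A‖ = 1 := by
  have h : ‖A‖ * ‖A‖ = 1 := by
    rw [← Matrix.l2_opNorm_conjTranspose_mul_self, conjTranspose_eq_transpose_of_trivial, hA,
      norm_one_mat hK]
  nlinarith [norm_nonneg A, h]

lemma tr_norm {m n : Type*} [Fintype m] [Fintype n] [DecidableEq m] [DecidableEq n]
    (A : Matrix m n ℝ) : ‖Aᵀ‖ = ‖A‖ := by
  rw [← conjTranspose_eq_transpose_of_trivial, Matrix.l2_opNorm_conjTranspose]

lemma diag_norm_le {K : ℕ} (g : Fin K → ℝ) (m : ℝ) (hm : 0 ≤ m) (h : ∀ k, |g k| ≤ m) :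
    ‖Matrix.diagonal g‖ ≤ m := by
  rw [Matrix.l2_opNorm_def]
  apply ContinuousLinearMap.opNorm_le_bound _ hm
  intro x
  have hx : ((Matrix.toEuclideanLin (Matrix.diagonal g)).toContinuousLinearMap x : Fin K → ℝ)
      = fun i => g i * x i := by
    funext i
    show (Matrix.diagonal g *ᵥ _) i = _
    rw [Matrix.mulVec_diagonal]
    rfl
  rw [EuclideanSpace.norm_eq, EuclideanSpace.norm_eq]
  have h1 : ∑ i, ‖((Matrix.toEuclideanLin (Matrix.diagonal g)).toContinuousLinearMap x) i‖ ^ 2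
      ≤ m ^ 2 * ∑ i, ‖x i‖ ^ 2 := by
    rw [Finset.mul_sum]
    apply Finset.sum_le_sum
    intro i _
    have hgi := h i
    have : ‖((Matrix.toEuclideanLin (Matrix.diagonal g)).toContinuousLinearMap x) i‖
        = |g i| * ‖x i‖ := by rw [congrFun hx i]; simp [abs_mul]
    rw [this, mul_pow]
    exact mul_le_mul_of_nonneg_right (by nlinarith [abs_nonneg (g i)]) (sq_nonneg _)
  calc Real.sqrt (∑ i, ‖((Matrix.toEuclideanLin (Matrix.diagonal g)).toContinuousLinearMap x) i‖ ^ 2)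
      ≤ Real.sqrt (m ^ 2 * ∑ i, ‖x i‖ ^ 2) := Real.sqrt_le_sqrt h1
    _ = m * Real.sqrt (∑ i, ‖x i‖ ^ 2) := by
        rw [Real.sqrt_mul (sq_nonneg m), Real.sqrt_sq hm]

lemma quad_bound {D : ℕ} (E : Matrix (Fin D) (Fin D) ℝ) (v : Fin D → ℝ) :
    |v ⬝ᵥ (E *ᵥ v)| ≤ ‖E‖ * (v ⬝ᵥ v) := by
  set x : EuclideanSpace ℝ (Fin D) := (WithLp.equiv 2 _).symm v with hxdef
  have hinner : v ⬝ᵥ (E *ᵥ v) = ⟪x, (Matrix.toEuclideanLin E).toContinuousLinearMap x⟫_ℝ := by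
    rw [PiLp.inner_apply]
    simp only [RCLike.inner_apply, starRingEnd_apply, star_trivial]
    rw [dotProduct_comm]; rfl
  have hnx : v ⬝ᵥ v = ‖x‖ ^ 2 := by
    rw [← real_inner_self_eq_norm_sq, PiLp.inner_apply]
    simp only [RCLike.inner_apply, starRingEnd_apply, star_trivial]
    rfl
  rw [hinner, hnx]
  calc |⟪x, (Matrix.toEuclideanLin E).toContinuousLinearMap x⟫_ℝ|
      ≤ ‖x‖ * ‖(Matrix.toEuclideanLin E).toContinuousLinearMap x‖ := abs_real_inner_le_norm _ _
    _ ≤ ‖x‖ * (‖E‖ * ‖x‖) := by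
        apply mul_le_mul_of_nonneg_left _ (norm_nonneg x)
        exact ((Matrix.toEuclideanLin E).toContinuousLinearMap).le_opNorm x
    _ = ‖E‖ * ‖x‖ ^ 2 := by ring

lemma quad_diag {D : ℕ} (O : Matrix (Fin D) (Fin D) ℝ) (τ : Fin D → ℝ) (z : Fin D → ℝ) :
    z ⬝ᵥ ((O * Matrix.diagonal τ * Oᵀ) *ᵥ z) =
      ∑ i, τ i * ((Oᵀ *ᵥ z) i * (Oᵀ *ᵥ z) i) := by
  rw [← Matrix.mulVec_mulVec, ← Matrix.mulVec_mulVec, Matrix.dotProduct_mulVec,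
    ← Matrix.mulVec_transpose]
  simp only [dotProduct, Matrix.mulVec_diagonal]
  exact Finset.sum_congr rfl fun i _ => by ring

lemma dot_orth {D : ℕ} (O : Matrix (Fin D) (Fin D) ℝ) (hO : O * Oᵀ = 1) (z : Fin D → ℝ) :
    (Oᵀ *ᵥ z) ⬝ᵥ (Oᵀ *ᵥ z) = z ⬝ᵥ z := by
  rw [Matrix.dotProduct_mulVec, Matrix.vecMul_transpose, Matrix.mulVec_mulVec, hO,
    Matrix.one_mulVec]


set_option maxHeartbeats 1000000 in
/-- if `Ŵ` whitens `M̂₂` (via its top-K eigendecomposition) and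
`Ŵᵀ M₂ Ŵ = A D Aᵀ` with `A` orthogonal and `D` diagonal, then
`‖I - D‖₂ ≤ ‖Ŵ‖₂² ‖M₂ - M̂₂‖₂`, and hence `‖I - D‖₂ ≤ (2/σ_K(M₂)) ‖M₂ - M̂₂‖₂`
when `‖M₂ - M̂₂‖₂ ≤ σ_K(M₂)/2`. -/
theorem stmt5 (D K : ℕ) (hK : 0 < K) (hKD : K ≤ D)
    (M₂ N₂ : Matrix (Fin D) (Fin D) ℝ) (h1 : M₂.PosSemidef) (h2 : N₂.PosSemidef)
    (σ : Fin D → ℝ) (Q : Matrix (Fin D) (Fin D) ℝ)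
    (hQ : Qᵀ * Q = 1) (hsort : Antitone σ)
    (hdec : M₂ = Q * Matrix.diagonal σ * Qᵀ)
    (σ' : Fin D → ℝ) (Q' : Matrix (Fin D) (Fin D) ℝ)
    (hQ' : Q'ᵀ * Q' = 1) (hsort' : Antitone σ')
    (hdec' : N₂ = Q' * Matrix.diagonal σ' * Q'ᵀ)
    (hσK : 0 < σ ⟨K - 1, by omega⟩)
    (U' : Matrix (Fin D) (Fin K) ℝ)
    (hU' : U' = Q'.submatrix id (Fin.castLE hKD))
    (W' : Matrix (Fin D) (Fin K) ℝ)
    (hW' : W' = U' * Matrix.diagonal (fun k => (Real.sqrt (σ' (Fin.castLE hKD k)))⁻¹))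
    (hwhiten : W'ᵀ * N₂ * W' = 1)
    (A : Matrix (Fin K) (Fin K) ℝ) (hA : Aᵀ * A = 1)
    (d : Fin K → ℝ)
    (hAD : W'ᵀ * M₂ * W' = A * Matrix.diagonal d * Aᵀ) :
    opNorm ((1 : Matrix (Fin K) (Fin K) ℝ) - Matrix.diagonal d)
      ≤ opNorm W' ^ 2 * opNorm (M₂ - N₂) ∧
    (opNorm (M₂ - N₂) ≤ σ ⟨K - 1, by omega⟩ / 2 →
      opNorm ((1 : Matrix (Fin K) (Fin K) ℝ) - Matrix.diagonal d)
        ≤ (2 / σ ⟨K - 1, by omega⟩) * opNorm (M₂ - N₂)) := by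
  have hKD1 : K - 1 < D := by omega
  simp only [opNorm_eq]
  set X : Matrix (Fin K) (Fin K) ℝ := 1 - Matrix.diagonal d with hX
  have hAAT : A * Aᵀ = 1 := mul_eq_one_comm.mp hA
  have hQQT : Q * Qᵀ = 1 := mul_eq_one_comm.mp hQ
  have hQ'QT : Q' * Q'ᵀ = 1 := mul_eq_one_comm.mp hQ'
  -- Part 1
  have hAXA : A * X * Aᵀ = W'ᵀ * (N₂ - M₂) * W' := by
    have e1 : W'ᵀ * (N₂ - M₂) * W' = W'ᵀ * N₂ * W' - W'ᵀ * M₂ * W' := by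
      rw [Matrix.mul_sub, Matrix.sub_mul]
    have e2 : A * X * Aᵀ = A * Aᵀ - A * Matrix.diagonal d * Aᵀ := by
      rw [hX]; noncomm_ring
    rw [e1, e2, hwhiten, hAD, hAAT]
  have hXid : Aᵀ * (A * X * Aᵀ) * A = X := by
    calc Aᵀ * (A * X * Aᵀ) * A = (Aᵀ * A) * X * (Aᵀ * A) := by noncomm_ring
    _ = X := by rw [hA, one_mul, mul_one]
  have hnormA : ‖A‖ = 1 := norm_orth hK hA
  have hnormAT : ‖Aᵀ‖ = 1 := by rw [tr_norm]; exact hnormA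
  have hpart1 : ‖X‖ ≤ ‖W'‖ ^ 2 * ‖M₂ - N₂‖ := by
    have c1 : ‖X‖ ≤ ‖A * X * Aᵀ‖ := by
      calc ‖X‖ = ‖Aᵀ * (A * X * Aᵀ) * A‖ := by rw [hXid]
      _ ≤ ‖Aᵀ * (A * X * Aᵀ)‖ * ‖A‖ := Matrix.l2_opNorm_mul _ _
      _ ≤ (‖Aᵀ‖ * ‖A * X * Aᵀ‖) * ‖A‖ :=
          mul_le_mul_of_nonneg_right (Matrix.l2_opNorm_mul _ _) (norm_nonneg _)
      _ = ‖A * X * Aᵀ‖ := by rw [hnormA, hnormAT]; ring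
    have c2 : ‖A * X * Aᵀ‖ ≤ ‖W'‖ ^ 2 * ‖M₂ - N₂‖ := by
      rw [hAXA]
      calc ‖W'ᵀ * (N₂ - M₂) * W'‖ ≤ ‖W'ᵀ * (N₂ - M₂)‖ * ‖W'‖ := Matrix.l2_opNorm_mul _ _
      _ ≤ (‖W'ᵀ‖ * ‖N₂ - M₂‖) * ‖W'‖ :=
          mul_le_mul_of_nonneg_right (Matrix.l2_opNorm_mul _ _) (norm_nonneg _)
      _ = ‖W'‖ ^ 2 * ‖M₂ - N₂‖ := by rw [tr_norm, norm_sub_rev]; ring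
    exact c1.trans c2
  refine ⟨hpart1, fun hE => ?_⟩
  -- Part 2
  have hE' : ‖M₂ - N₂‖ ≤ σ ⟨K - 1, hKD1⟩ / 2 := hE
  have hσK' : 0 < σ ⟨K - 1, hKD1⟩ := hσK
  -- compute W'ᵀ W' and positivity of σ'
  set s : Fin K → ℝ := fun k => (Real.sqrt (σ' (Fin.castLE hKD k)))⁻¹ with hs
  have hP : U'ᵀ * Q' = (1 : Matrix (Fin D) (Fin D) ℝ).submatrix (Fin.castLE hKD) id := by
    ext k j
    have h := congrFun (congrFun hQ' (Fin.castLE hKD k)) j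
    simp [Matrix.mul_apply] at h ⊢
    simp [hU']; exact h
  have hPt : Q'ᵀ * U' = (1 : Matrix (Fin D) (Fin D) ℝ).submatrix id (Fin.castLE hKD) := by
    have h := congrArg Matrix.transpose hP
    simpa [Matrix.transpose_mul, Matrix.transpose_submatrix, Matrix.transpose_one] using h
  have hsand : ∀ τ : Fin D → ℝ, U'ᵀ * (Q' * Matrix.diagonal τ * Q'ᵀ) * U'
      = Matrix.diagonal (fun k => τ (Fin.castLE hKD k)) := by
    intro τ
    have e : U'ᵀ * (Q' * Matrix.diagonal τ * Q'ᵀ) * U'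
        = (U'ᵀ * Q') * Matrix.diagonal τ * (Q'ᵀ * U') := by
      simp only [Matrix.mul_assoc]
    rw [e, hP, hPt]
    ext k l
    simp [Matrix.mul_apply, Matrix.diagonal_apply, Matrix.one_apply, Matrix.submatrix_apply,
      Finset.sum_ite_eq, Finset.sum_ite_eq']
    by_cases hkl : k = l <;> simp [hkl]
  have hUU : U'ᵀ * U' = 1 := by
    have e : (U'ᵀ * Q') * (Q'ᵀ * U') = U'ᵀ * U' := by
      rw [Matrix.mul_assoc, ← Matrix.mul_assoc Q' Q'ᵀ U', hQ'QT, Matrix.one_mul]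
    rw [← e, hP, hPt]
    ext k l
    simp [Matrix.mul_apply, Matrix.one_apply, Matrix.submatrix_apply, Finset.sum_ite_eq,
      Finset.sum_ite_eq', Fin.castLE_inj]
  have hWsand : ∀ Y : Matrix (Fin D) (Fin D) ℝ, W'ᵀ * Y * W'
      = Matrix.diagonal s * (U'ᵀ * Y * U') * Matrix.diagonal s := by
    intro Y
    rw [hW', Matrix.transpose_mul, Matrix.diagonal_transpose]
    simp only [Matrix.mul_assoc]
  have hWN : W'ᵀ * N₂ * W' = Matrix.diagonal (fun k => s k * σ' (Fin.castLE hKD k) * s k) := by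
    rw [hWsand, hdec', hsand σ', Matrix.diagonal_mul_diagonal, Matrix.diagonal_mul_diagonal]
  have hq : ∀ k : Fin K, s k * σ' (Fin.castLE hKD k) * s k = 1 := by
    intro k
    have h := hwhiten
    rw [hWN] at h
    have h2 := congrFun (congrFun h k) k
    simpa [Matrix.diagonal_apply_eq, Matrix.one_apply_eq] using h2
  have hσ'pos : ∀ k : Fin K, 0 < σ' (Fin.castLE hKD k) := by
    intro k
    by_contra hcon
    push_neg at hcon
    have hz : Real.sqrt (σ' (Fin.castLE hKD k)) = 0 := Real.sqrt_eq_zero'.mpr hcon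
    have h := hq k
    rw [hs] at h
    simp only [hz] at h
    norm_num at h
  have hs2 : ∀ k : Fin K, s k * s k = (σ' (Fin.castLE hKD k))⁻¹ := by
    intro k
    rw [hs]
    simp only
    rw [← mul_inv, Real.mul_self_sqrt (hσ'pos k).le]
  have hWW : W'ᵀ * W' = Matrix.diagonal (fun k => (σ' (Fin.castLE hKD k))⁻¹) := by
    have e : W'ᵀ * (Q' * Q'ᵀ) * W' = W'ᵀ * W' := by
      rw [hQ'QT, Matrix.mul_one]
    rw [← e, hWsand, hQ'QT, Matrix.mul_one, hUU, Matrix.mul_one, Matrix.diagonal_mul_diagonal]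
    exact congrArg Matrix.diagonal (funext hs2)
  -- Weyl's inequality at index K-1
  set B := Q.submatrix id (Fin.castLE hKD) with hBdef
  have hQB : Qᵀ * B = (1 : Matrix (Fin D) (Fin D) ℝ).submatrix id (Fin.castLE hKD) := by
    ext i j
    have h := congrFun (congrFun hQ i) (Fin.castLE hKD j)
    simp [Matrix.mul_apply] at h ⊢
    simp [hBdef]; exact h
  have hBB : Bᵀ * B = 1 := by
    ext k l
    have h := congrFun (congrFun hQ (Fin.castLE hKD k)) (Fin.castLE hKD l)
    simp [Matrix.mul_apply, hBdef] at h ⊢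
    rw [h]
    simp [Matrix.one_apply, Fin.castLE_inj]
  set G := Q'ᵀ * B with hG
  set R := G.submatrix (Fin.castLE (show K - 1 ≤ D by omega)) id with hR
  obtain ⟨c, hc0, hRc⟩ : ∃ c : Fin K → ℝ, c ≠ 0 ∧ R *ᵥ c = 0 := by
    have hni : ¬ Function.Injective R.mulVecLin := by
      intro hinj
      have hle := LinearMap.finrank_le_finrank_of_injective hinj
      rw [Module.finrank_fin_fun, Module.finrank_fin_fun] at hle
      omega
    rw [← LinearMap.ker_eq_bot] at hni
    obtain ⟨c, hc, hcne⟩ := (Submodule.ne_bot_iff _).mp hni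
    exact ⟨c, hcne, by simpa [Matrix.mulVecLin_apply] using (LinearMap.mem_ker.mp hc)⟩
  set v := B *ᵥ c with hv
  have hvc : Bᵀ *ᵥ v = c := by rw [hv, Matrix.mulVec_mulVec, hBB, Matrix.one_mulVec]
  have hvne : v ≠ 0 := fun h => hc0 (by rw [← hvc, h, Matrix.mulVec_zero])
  set w := Qᵀ *ᵥ v with hwdef
  set u := Q'ᵀ *ᵥ v with hudef
  have hwPc : w = ((1 : Matrix (Fin D) (Fin D) ℝ).submatrix id (Fin.castLE hKD)) *ᵥ c := by
    rw [hwdef, hv, Matrix.mulVec_mulVec, hQB]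
  have hw0 : ∀ i : Fin D, K ≤ (i : ℕ) → w i = 0 := by
    intro i hi
    have e : w i = ∑ k, (1 : Matrix (Fin D) (Fin D) ℝ) i (Fin.castLE hKD k) * c k := by
      rw [hwPc]
      simp only [Matrix.mulVec, dotProduct, Matrix.submatrix_apply, id]
      rfl
    rw [e]
    apply Finset.sum_eq_zero
    intro k _
    have hne : i ≠ Fin.castLE hKD k := by
      intro he
      have : (i : ℕ) = (k : ℕ) := by rw [he]; rfl
      have := k.2
      omega
    rw [Matrix.one_apply_ne hne, zero_mul]
  have hu0 : ∀ i : Fin D, (i : ℕ) < K - 1 → u i = 0 := by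
    intro i hi
    have h1 : u = G *ᵥ c := by rw [hudef, hv, Matrix.mulVec_mulVec, hG]
    have h2 : (R *ᵥ c) ⟨(i : ℕ), by omega⟩ = u i := by
      rw [h1, hR]
      simp [Matrix.mulVec, dotProduct, Matrix.submatrix_apply]
    rw [← h2, hRc]
    rfl
  have hMv : v ⬝ᵥ (M₂ *ᵥ v) = ∑ i, σ i * (w i * w i) := by
    rw [hdec]; exact quad_diag Q σ v
  have hNv : v ⬝ᵥ (N₂ *ᵥ v) = ∑ i, σ' i * (u i * u i) := by
    rw [hdec']; exact quad_diag Q' σ' v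
  have hvw : v ⬝ᵥ v = ∑ i, w i * w i := by
    rw [← dot_orth Q hQQT v]; rfl
  have hvu : v ⬝ᵥ v = ∑ i, u i * u i := by
    rw [← dot_orth Q' hQ'QT v]; rfl
  have hvpos : 0 < v ⬝ᵥ v := by
    have hnn : 0 ≤ v ⬝ᵥ v := Finset.sum_nonneg fun i _ => mul_self_nonneg _
    have hne : v ⬝ᵥ v ≠ 0 := fun h => hvne (dotProduct_self_eq_zero.mp h)
    exact lt_of_le_of_ne hnn (Ne.symm hne)
  have hA1 : σ ⟨K - 1, hKD1⟩ * (v ⬝ᵥ v) ≤ v ⬝ᵥ (M₂ *ᵥ v) := by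
    rw [hMv, hvw, Finset.mul_sum]
    apply Finset.sum_le_sum
    intro i _
    by_cases hi : (i : ℕ) < K
    · have hle : σ ⟨K - 1, hKD1⟩ ≤ σ i := hsort (by rw [Fin.le_def]; simp; omega)
      exact mul_le_mul_of_nonneg_right hle (mul_self_nonneg _)
    · rw [hw0 i (by omega)]
      simp
  have hB1 : v ⬝ᵥ (N₂ *ᵥ v) ≤ σ' ⟨K - 1, hKD1⟩ * (v ⬝ᵥ v) := by
    rw [hNv, hvu, Finset.mul_sum]
    apply Finset.sum_le_sum
    intro i _
    by_cases hi : (i : ℕ) < K - 1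
    · rw [hu0 i hi]
      simp
    · have hle : σ' i ≤ σ' ⟨K - 1, hKD1⟩ := hsort' (by rw [Fin.le_def]; simp; omega)
      exact mul_le_mul_of_nonneg_right hle (mul_self_nonneg _)
  have hC1 : v ⬝ᵥ (M₂ *ᵥ v) - v ⬝ᵥ (N₂ *ᵥ v) ≤ ‖M₂ - N₂‖ * (v ⬝ᵥ v) := by
    have h := (abs_le.mp (quad_bound (M₂ - N₂) v)).2
    rw [Matrix.sub_mulVec, dotProduct_sub] at h
    linarith
  have hweyl : σ ⟨K - 1, hKD1⟩ - ‖M₂ - N₂‖ ≤ σ' ⟨K - 1, hKD1⟩ := by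
    have key : (σ ⟨K - 1, hKD1⟩ - ‖M₂ - N₂‖) * (v ⬝ᵥ v) ≤ σ' ⟨K - 1, hKD1⟩ * (v ⬝ᵥ v) := by
      have h5 : σ ⟨K - 1, hKD1⟩ * (v ⬝ᵥ v) - ‖M₂ - N₂‖ * (v ⬝ᵥ v) ≤ v ⬝ᵥ (N₂ *ᵥ v) := by
        linarith
      calc (σ ⟨K - 1, hKD1⟩ - ‖M₂ - N₂‖) * (v ⬝ᵥ v)
          = σ ⟨K - 1, hKD1⟩ * (v ⬝ᵥ v) - ‖M₂ - N₂‖ * (v ⬝ᵥ v) := by ring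
      _ ≤ v ⬝ᵥ (N₂ *ᵥ v) := h5
      _ ≤ σ' ⟨K - 1, hKD1⟩ * (v ⬝ᵥ v) := hB1
    exact le_of_mul_le_mul_right key hvpos
  have hσ'κpos : 0 < σ' ⟨K - 1, hKD1⟩ := hσ'pos ⟨K - 1, by omega⟩
  have hWnorm : ‖W'‖ ^ 2 ≤ (σ' ⟨K - 1, hKD1⟩)⁻¹ := by
    have hbd : ‖Matrix.diagonal (fun k => (σ' (Fin.castLE hKD k))⁻¹)‖ ≤ (σ' ⟨K - 1, hKD1⟩)⁻¹ := by
      apply diag_norm_le _ _ (by positivity)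
      intro k
      have h1 : σ' ⟨K - 1, hKD1⟩ ≤ σ' (Fin.castLE hKD k) := by
        apply hsort'
        rw [Fin.le_def]
        simp
        omega
      have h2 : 0 < σ' (Fin.castLE hKD k) := hσ'pos k
      rw [abs_of_pos (by positivity)]
      exact inv_anti₀ hσ'κpos h1
    calc ‖W'‖ ^ 2 = ‖W'ᵀ * W'‖ := by
          rw [sq, ← Matrix.l2_opNorm_conjTranspose_mul_self W',
            conjTranspose_eq_transpose_of_trivial]
    _ = ‖Matrix.diagonal (fun k => (σ' (Fin.castLE hKD k))⁻¹)‖ := by rw [hWW]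
    _ ≤ (σ' ⟨K - 1, hKD1⟩)⁻¹ := hbd
  have hfrac : (σ' ⟨K - 1, hKD1⟩)⁻¹ ≤ 2 / σ ⟨K - 1, hKD1⟩ := by
    have h2 : σ ⟨K - 1, hKD1⟩ / 2 ≤ σ' ⟨K - 1, hKD1⟩ := by linarith
    have h3 : (σ' ⟨K - 1, hKD1⟩)⁻¹ ≤ (σ ⟨K - 1, hKD1⟩ / 2)⁻¹ :=
      inv_anti₀ (by positivity) h2
    rw [show (σ ⟨K - 1, hKD1⟩ / 2)⁻¹ = 2 / σ ⟨K - 1, hKD1⟩ by rw [inv_div]] at h3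
    exact h3
  show ‖X‖ ≤ 2 / σ ⟨K - 1, hKD1⟩ * ‖M₂ - N₂‖
  calc ‖X‖ ≤ ‖W'‖ ^ 2 * ‖M₂ - N₂‖ := hpart1
  _ ≤ 2 / σ ⟨K - 1, hKD1⟩ * ‖M₂ - N₂‖ :=
      mul_le_mul_of_nonneg_right (hWnorm.trans hfrac) (norm_nonneg _)
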